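/- For every x ∈ ℝⁿ₊, the point x̄ = x − R(x) (equivalently, the minimizer over u ∈ ℝⁿ₊ of ⟨∇f(x), u − x⟩ + (1/2)‖u − x‖_Λ²) satisfies f(x̄) − f(x⋆) ≤ (n−1)·‖R(x)‖_Λ² + (n+1)·‖R(x)‖_Λ·‖x − x⋆‖_Λ, where x⋆ is any minimizer of f over ℝⁿ₊. -/

import Mathlib

open Finset

/-- For every `x ∈ ℝⁿ₊`, the point `x̄ = x − R(x)` satisfies
`f(x̄) − f(x⋆) ≤ (n−1)‖R(x)‖_Λ² + (n+1)‖R(x)‖_Λ·‖x − x⋆‖_Λ`, where `x⋆` is any minimizer of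
`f` over `ℝⁿ₊`, `R(x) = x − max(x − Λ⁻¹∇f(x), 0)` and `‖v‖_Λ = √(Σ_j ‖A_{:j}‖₂² v_j²)`. -/
theorem prox_step_bound {m n : ℕ} (hm : 0 < m) (hn : 0 < n)
    (A : Matrix (Fin m) (Fin n) ℝ)
    (hA_nonneg : ∀ i j, 0 ≤ A i j)
    (hA_cols : ∀ j, ∃ i, A i j ≠ 0)
    (f : (Fin n → ℝ) → ℝ)
    (hf : ∀ x, f x = (1/2) * ∑ i, (A.mulVec x i)^2 - ∑ j, x j)
    (xstar : Fin n → ℝ)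
    (hxs_nonneg : ∀ j, 0 ≤ xstar j)
    (hxs_min : ∀ x : Fin n → ℝ, (∀ j, 0 ≤ x j) → f xstar ≤ f x)
    (x : Fin n → ℝ) (hx : ∀ j, 0 ≤ x j)
    (R : Fin n → ℝ)
    (hR : ∀ j, R j = x j -
      max (x j - ((∑ i, A i j * A.mulVec x i) - 1) / (∑ i, (A i j)^2)) 0)
    (xbar : Fin n → ℝ) (hxbar : xbar = x - R) :
    f xbar - f xstar ≤
      ((n : ℝ) - 1) * (∑ j, (∑ i, (A i j)^2) * (R j)^2)
      + ((n : ℝ) + 1) * Real.sqrt (∑ j, (∑ i, (A i j)^2) * (R j)^2)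
        * Real.sqrt (∑ j, (∑ i, (A i j)^2) * (x j - xstar j)^2) := by
  classical
  -- notation
  let Lam : Fin n → ℝ := fun j => ∑ i, (A i j)^2
  let g : Fin n → ℝ := fun j => (∑ i, A i j * A.mulVec x i) - 1
  have hLam : ∀ j, 0 < Lam j := by
    intro j
    obtain ⟨i, hi⟩ := hA_cols j
    exact Finset.sum_pos' (fun i _ => sq_nonneg _)
      ⟨i, Finset.mem_univ i, by positivity⟩
  have hxbarj : ∀ j, xbar j = max (x j - g j / Lam j) 0 := by
    intro j
    have : xbar j = x j - R j := by rw [hxbar]; rfl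
    rw [this, hR j]; ring
  have hxbar_nonneg : ∀ j, 0 ≤ xbar j := fun j => by
    rw [hxbarj]; exact le_max_right _ _
  have hRj : ∀ j, R j = x j - xbar j := by
    intro j; rw [hxbar]; simp
  -- quadratic expansion of f
  have key : ∀ y : Fin n → ℝ, f y - f x =
      (∑ j, g j * (y j - x j)) + (1/2) * ∑ i, (∑ j, A i j * (y j - x j))^2 := by
    intro y
    have hmv : ∀ z : Fin n → ℝ, ∀ i, A.mulVec z i = ∑ j, A i j * z j := by
      intro z i; rfl
    have hswap : ∑ j, (∑ i, A i j * A.mulVec x i) * (y j - x j)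
        = ∑ i, A.mulVec x i * (∑ j, A i j * (y j - x j)) := by
      have : ∀ j, (∑ i, A i j * A.mulVec x i) * (y j - x j)
          = ∑ i, A.mulVec x i * (A i j * (y j - x j)) := by
        intro j
        rw [Finset.sum_mul]
        exact Finset.sum_congr rfl fun i _ => by ring
      rw [Finset.sum_congr rfl fun j _ => this j, Finset.sum_comm]
      exact Finset.sum_congr rfl fun i _ => (Finset.mul_sum _ _ _).symm
    have hmvy : ∀ i, A.mulVec y i = A.mulVec x i + ∑ j, A i j * (y j - x j) := by
      intro i
      rw [hmv y i, hmv x i, ← Finset.sum_add_distrib]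
      exact Finset.sum_congr rfl fun j _ => by ring
    rw [hf y, hf x]
    have h1 : ∑ j, g j * (y j - x j)
        = (∑ i, A.mulVec x i * (∑ j, A i j * (y j - x j))) - ∑ j, (y j - x j) := by
      have : ∀ j, g j * (y j - x j)
          = (∑ i, A i j * A.mulVec x i) * (y j - x j) - (y j - x j) := by
        intro j; show ((∑ i, A i j * A.mulVec x i) - 1) * (y j - x j) = _; ring
      rw [Finset.sum_congr rfl fun j _ => this j, Finset.sum_sub_distrib, hswap]
    rw [h1]
    have h2 : ∑ i, (A.mulVec y i)^2
        = ∑ i, ((A.mulVec x i)^2 + 2 * A.mulVec x i * (∑ j, A i j * (y j - x j))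
            + (∑ j, A i j * (y j - x j))^2) := by
      refine Finset.sum_congr rfl fun i _ => ?_
      rw [hmvy i]; ring
    rw [h2, Finset.sum_add_distrib, Finset.sum_add_distrib, Finset.sum_sub_distrib]
    have h3 : ∑ i, 2 * A.mulVec x i * (∑ j, A i j * (y j - x j))
        = 2 * ∑ i, A.mulVec x i * (∑ j, A i j * (y j - x j)) := by
      rw [Finset.mul_sum]; exact Finset.sum_congr rfl fun i _ => by ring
    rw [h3]
    ring
  -- optimality of xbar componentwise
  have hopt : ∀ j, g j * (xbar j - xstar j) ≤ Lam j * R j * (xbar j - xstar j) := by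
    intro j
    rcases le_or_gt 0 (x j - g j / Lam j) with h | h
    · have hx2 : xbar j = x j - g j / Lam j := by rw [hxbarj, max_eq_left h]
      have hne : Lam j ≠ 0 := (hLam j).ne'
      have hg : g j = Lam j * R j := by
        rw [hRj j, hx2]
        field_simp
        ring
      rw [hg]
    · have hx0 : xbar j = 0 := by rw [hxbarj, max_eq_right h.le]
      have hgR : Lam j * R j ≤ g j := by
        rw [hRj j, hx0, sub_zero]
        have h' : x j * Lam j < g j := (lt_div_iff₀ (hLam j)).mp (by linarith)
        nlinarith
      nlinarith [hxs_nonneg j, hx0]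
  -- abbreviations for the Λ-norms squared
  set S : ℝ := ∑ j, (∑ i, (A i j)^2) * (R j)^2 with hSdef
  set T : ℝ := ∑ j, (∑ i, (A i j)^2) * (x j - xstar j)^2 with hTdef
  have hS_nonneg : 0 ≤ S := Finset.sum_nonneg fun j _ =>
    mul_nonneg (Finset.sum_nonneg fun i _ => sq_nonneg _) (sq_nonneg _)
  have hT_nonneg : 0 ≤ T := Finset.sum_nonneg fun j _ =>
    mul_nonneg (Finset.sum_nonneg fun i _ => sq_nonneg _) (sq_nonneg _)
  -- Cauchy-Schwarz: ∑ Λ R (x - x⋆) ≤ √S √T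
  have hCS : ∑ j, Lam j * R j * (x j - xstar j) ≤ Real.sqrt S * Real.sqrt T := by
    have h := Real.sum_mul_le_sqrt_mul_sqrt Finset.univ
      (fun j => Real.sqrt (Lam j) * R j) (fun j => Real.sqrt (Lam j) * (x j - xstar j))
    have e1 : ∀ j, Real.sqrt (Lam j) * R j * (Real.sqrt (Lam j) * (x j - xstar j))
        = Lam j * R j * (x j - xstar j) := by
      intro j
      have : Real.sqrt (Lam j) * Real.sqrt (Lam j) = Lam j :=
        Real.mul_self_sqrt (hLam j).le
      linear_combination (R j * (x j - xstar j)) * this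
    have e2 : ∀ j, (Real.sqrt (Lam j) * R j)^2 = Lam j * (R j)^2 := by
      intro j; rw [mul_pow, Real.sq_sqrt (hLam j).le]
    have e3 : ∀ j, (Real.sqrt (Lam j) * (x j - xstar j))^2
        = Lam j * (x j - xstar j)^2 := by
      intro j; rw [mul_pow, Real.sq_sqrt (hLam j).le]
    calc ∑ j, Lam j * R j * (x j - xstar j)
        = ∑ j, Real.sqrt (Lam j) * R j * (Real.sqrt (Lam j) * (x j - xstar j)) :=
          (Finset.sum_congr rfl fun j _ => (e1 j)).symm
      _ ≤ Real.sqrt (∑ j, (Real.sqrt (Lam j) * R j)^2)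
          * Real.sqrt (∑ j, (Real.sqrt (Lam j) * (x j - xstar j))^2) := h
      _ = Real.sqrt S * Real.sqrt T := by
          rw [Finset.sum_congr rfl fun j _ => e2 j,
              Finset.sum_congr rfl fun j _ => e3 j]
  -- smoothness: ‖AR‖² ≤ n·S
  have hsmooth : ∑ i, (∑ j, A i j * R j)^2 ≤ (n : ℝ) * S := by
    have h1 : ∀ i, (∑ j, A i j * R j)^2 ≤ (n : ℝ) * ∑ j, (A i j * R j)^2 := by
      intro i
      have := sq_sum_le_card_mul_sum_sq (s := Finset.univ) (f := fun j => A i j * R j)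
      simpa using this
    calc ∑ i, (∑ j, A i j * R j)^2
        ≤ ∑ i : Fin m, (n : ℝ) * ∑ j, (A i j * R j)^2 :=
          Finset.sum_le_sum fun i _ => h1 i
      _ = (n : ℝ) * ∑ i : Fin m, ∑ j, (A i j * R j)^2 := by rw [Finset.mul_sum]
      _ = (n : ℝ) * S := by
          rw [hSdef, Finset.sum_comm]
          congr 1
          refine Finset.sum_congr rfl fun j _ => ?_
          rw [Finset.sum_mul]
          exact Finset.sum_congr rfl fun i _ => by ring
  -- main chain
  have hkb := key xbar
  have hks := key xstar
  have hAb : ∀ i, (∑ j, A i j * (xbar j - x j))^2 = (∑ j, A i j * R j)^2 := by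
    intro i
    have : ∑ j, A i j * (xbar j - x j) = -∑ j, A i j * R j := by
      rw [← Finset.sum_neg_distrib]
      refine Finset.sum_congr rfl fun j _ => ?_
      rw [hRj j]; ring
    rw [this, neg_sq]
  have hkb' : f xbar - f x = (∑ j, g j * (xbar j - x j))
      + (1/2) * ∑ i, (∑ j, A i j * R j)^2 := by
    rw [hkb]; congr 1; congr 1
    exact Finset.sum_congr rfl fun i _ => hAb i
  have hgsplit : (∑ j, g j * (xbar j - x j)) - (∑ j, g j * (xstar j - x j))
      = ∑ j, g j * (xbar j - xstar j) := by
    rw [← Finset.sum_sub_distrib]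
    exact Finset.sum_congr rfl fun j _ => by ring
  have hoptsum : ∑ j, g j * (xbar j - xstar j)
      ≤ ∑ j, Lam j * R j * (xbar j - xstar j) :=
    Finset.sum_le_sum fun j _ => hopt j
  have hsplit2 : ∑ j, Lam j * R j * (xbar j - xstar j)
      = (∑ j, Lam j * R j * (x j - xstar j)) - S := by
    rw [hSdef, ← Finset.sum_sub_distrib]
    refine Finset.sum_congr rfl fun j _ => ?_
    have : xbar j = x j - R j := by rw [hxbar]; rfl
    rw [this]; show Lam j * R j * (x j - R j - xstar j) = _; ring
  have hAq_nonneg : 0 ≤ ∑ i, (∑ j, A i j * (xstar j - x j))^2 :=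
    Finset.sum_nonneg fun i _ => sq_nonneg _
  have hsqrts : 0 ≤ Real.sqrt S * Real.sqrt T :=
    mul_nonneg (Real.sqrt_nonneg _) (Real.sqrt_nonneg _)
  have hmain : f xbar - f xstar ≤ Real.sqrt S * Real.sqrt T - S + ((n : ℝ)/2) * S := by
    have : f xbar - f xstar = (f xbar - f x) - (f xstar - f x) := by ring
    rw [this, hkb', hks]
    have h4 : (∑ j, g j * (xbar j - x j)) - (∑ j, g j * (xstar j - x j))
        ≤ Real.sqrt S * Real.sqrt T - S := by
      rw [hgsplit]
      calc ∑ j, g j * (xbar j - xstar j)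
          ≤ ∑ j, Lam j * R j * (xbar j - xstar j) := hoptsum
        _ = (∑ j, Lam j * R j * (x j - xstar j)) - S := hsplit2
        _ ≤ Real.sqrt S * Real.sqrt T - S := by linarith [hCS]
    nlinarith [hsmooth, hAq_nonneg]
  have hn1 : (1 : ℝ) ≤ (n : ℝ) := by exact_mod_cast hn
  nlinarith [hmain, hS_nonneg, hsqrts, hn1]
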